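/- Let Γ be a profinite group and S ⊆ Γ a subset not containing 1. Endow the Cayley graph (Γ, Γ × S, s, t) where s(γ,a) = γ and t(γ,a) = γ·a with the topology on (Γ × S) ⊔ Γ ≅ Γ × (S ∪ {1}) induced from the product topology. Then this profinite Cayley graph is a split profinite graph if and only if 1 does not lie in the closure of S. -/

import Mathlib

/-- Let `Γ` be a profinite group and `S ⊆ Γ` a subset not containing `1`.
Consider the Cayley graph of `Γ` with respect to `S`: its vertex set is `Γ`, its edge set
is `Γ × S`, with source `s(γ,a) = γ` and target `t(γ,a) = γ·a`.  Identify the disjoint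
union `(Γ × S) ⊔ Γ` with the subspace `T = Γ × (S ∪ {1})` of `Γ × Γ` (the vertex `γ`
corresponding to `(γ,1)` and the edge `(γ,a)` to `(γ,a)`), with its induced topology.
Then this is a profinite graph: the vertex set is closed and the extended source and
target maps `T → Γ` (given by `(γ,a) ↦ γ` and `(γ,a) ↦ γ·a`, which are the identity on
the vertex part) are continuous; moreover it is a *split* profinite graph (i.e. the edge
set is also closed in `T`) if and only if `1` does not lie in the closure of `S`. -/
theorem profinite_cayley_graph_split_iff {Γ : Type*} [Group Γ] [TopologicalSpace Γ]
    [CompactSpace Γ] [T2Space Γ] [TotallyDisconnectedSpace Γ] [IsTopologicalGroup Γ]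
    (S : Set Γ) (hS : (1 : Γ) ∉ S) :
    -- the vertex set `Γ × {1}` is closed in `T = Γ × (S ∪ {1})`
    IsClosed {p : {p : Γ × Γ // p.2 ∈ insert (1 : Γ) S} | (p : Γ × Γ).2 = 1} ∧
    -- the extended source map is continuous
    Continuous (fun p : {p : Γ × Γ // p.2 ∈ insert (1 : Γ) S} => (p : Γ × Γ).1) ∧
    -- the extended target map is continuous
    Continuous (fun p : {p : Γ × Γ // p.2 ∈ insert (1 : Γ) S} =>
      (p : Γ × Γ).1 * (p : Γ × Γ).2) ∧
    -- splitness criterion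
    (IsClosed {p : {p : Γ × Γ // p.2 ∈ insert (1 : Γ) S} | (p : Γ × Γ).2 ∈ S} ↔
      (1 : Γ) ∉ closure S) := by
  have hcont : Continuous (fun p : {p : Γ × Γ // p.2 ∈ insert (1 : Γ) S} => (p : Γ × Γ)) :=
    continuous_subtype_val
  refine ⟨?_, ?_, ?_, ?_⟩
  · exact isClosed_eq (hcont.snd) continuous_const
  · exact hcont.fst
  · exact hcont.fst.mul hcont.snd
  · constructor
    · intro hcl h1
      -- the point (1,1) lies in the closure of the edge set
      set E : Set {p : Γ × Γ // p.2 ∈ insert (1 : Γ) S} := {p | (p : Γ × Γ).2 ∈ S}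
      have hone : ((1 : Γ), (1 : Γ)).2 ∈ insert (1 : Γ) S := Set.mem_insert _ _
      have : (⟨(1, 1), hone⟩ : {p : Γ × Γ // p.2 ∈ insert (1 : Γ) S}) ∈ closure E := by
        rw [mem_closure_iff]
        intro o ho hmem
        rw [isOpen_induced_iff] at ho
        obtain ⟨U, hU, rfl⟩ := ho
        have hU2 : IsOpen {a : Γ | ((1 : Γ), a) ∈ U} :=
          hU.preimage (Continuous.prodMk_right 1)
        have h11 : (1 : Γ) ∈ {a : Γ | ((1 : Γ), a) ∈ U} := hmem
        have := mem_closure_iff.mp h1 _ hU2 h11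
        obtain ⟨a, haU, haS⟩ := this
        exact ⟨⟨(1, a), Set.mem_insert_iff.mpr (Or.inr haS)⟩, haU, haS⟩
      have := hcl.closure_subset this
      exact hS this
    · intro h1
      have : {p : {p : Γ × Γ // p.2 ∈ insert (1 : Γ) S} | (p : Γ × Γ).2 ∈ S} =
          (fun p : {p : Γ × Γ // p.2 ∈ insert (1 : Γ) S} => (p : Γ × Γ).2) ⁻¹' closure S := by
        ext ⟨⟨x, a⟩, ha⟩
        simp only [Set.mem_setOf_eq, Set.mem_preimage]
        constructor
        · exact fun h => subset_closure h
        · intro h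
          rcases ha with rfl | ha
          · exact absurd h h1
          · exact ha
      rw [this]
      exact isClosed_closure.preimage hcont.snd
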